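/- Let X be a compact metrizable space such that dim_G(X) is defined (TWO has a winning strategy in G_c^α(𝓞,𝓞) on X for some ordinal α), and let 𝓒 denote the Cantor set. Then dim_G(X × 𝓒) = dim_G(X). -/
import Mathlib


open Set Topology

/-- The Lebesgue covering dimension of `X` is at most `n`: every finite open cover has an
open refinement, still covering `X`, in which every point lies in at most `n+1` members. -/
def CovDimLE (X : Type*) [TopologicalSpace X] (n : ℕ) : Prop :=
  ∀ 𝓤 : Set (Set X), 𝓤.Finite → (∀ U ∈ 𝓤, IsOpen U) → ⋃₀ 𝓤 = Set.univ →
    ∃ 𝓥 : Set (Set X), (∀ V ∈ 𝓥, IsOpen V) ∧ ⋃₀ 𝓥 = Set.univ ∧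
      (∀ V ∈ 𝓥, ∃ U ∈ 𝓤, V ⊆ U) ∧
      ∀ x : X, {V | V ∈ 𝓥 ∧ x ∈ V}.Finite ∧ {V | V ∈ 𝓥 ∧ x ∈ V}.ncard ≤ n + 1

/-- `X` is finite dimensional. -/
def FinDim (X : Type*) [TopologicalSpace X] : Prop :=
  ∃ n : ℕ, CovDimLE X n

/-- The compact finite-dimensional subsets of `X` (as subspaces). -/
def kfdSets (X : Type*) [TopologicalSpace X] : Set (Set X) :=
  {T : Set X | IsCompact T ∧ FinDim T}

/-- The finite-dimensional subsets of `X` (as subspaces). -/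
def fdSets (X : Type*) [TopologicalSpace X] : Set (Set X) :=
  {T : Set X | FinDim T}

/-- `X` is countable dimensional: a union of countably many zero-dimensional subsets. -/
def CountableDimensional (X : Type*) [TopologicalSpace X] : Prop :=
  ∃ Z : ℕ → Set X, (∀ n, CovDimLE (Z n) 0) ∧ (⋃ n, Z n) = Set.univ

/-- `𝓤` is an open `𝓣`-cover of `X`. -/
def IsTCover {X : Type*} [TopologicalSpace X] (𝓣 𝓤 : Set (Set X)) : Prop :=
  (∀ U ∈ 𝓤, IsOpen U) ∧ (∀ x : X, ∃ U ∈ 𝓤, x ∈ U) ∧ ∀ T ∈ 𝓣, ∃ U ∈ 𝓤, T ⊆ U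

/-- `𝓤` is an open cover of `X`. -/
def IsOpenCover {X : Type*} [TopologicalSpace X] (𝓤 : Set (Set X)) : Prop :=
  (∀ U ∈ 𝓤, IsOpen U) ∧ ∀ x : X, ∃ U ∈ 𝓤, x ∈ U

/-- A strategy for TWO in the length-`α` game `G₁`: to each inning `γ < α` and each
history `(O_β : β ≤ γ)` of moves of ONE it assigns a response (a subset of `X`). -/
def TwoStrategy (X : Type*) (α : Ordinal.{0}) :=
  ∀ γ : Ordinal.{0}, γ < α → ((β : Ordinal.{0}) → β ≤ γ → Set (Set X)) → Set X

/-- The strategy `F` for TWO is winning in `G₁^α(𝓞(𝓣),𝓞)`: responses to legal histories are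
elements of ONE's last move, and for every play of `𝓣`-covers by ONE the responses cover `X`. -/
def IsWinningTwo {X : Type*} [TopologicalSpace X] (𝓣 : Set (Set X)) (α : Ordinal.{0})
    (F : TwoStrategy X α) : Prop :=
  (∀ (γ : Ordinal.{0}) (hγ : γ < α) (O : (β : Ordinal.{0}) → β ≤ γ → Set (Set X)),
      (∀ β hβ, IsTCover 𝓣 (O β hβ)) → F γ hγ O ∈ O γ le_rfl) ∧
  ∀ O : (γ : Ordinal.{0}) → γ < α → Set (Set X),
    (∀ γ hγ, IsTCover 𝓣 (O γ hγ)) →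
    ∀ x : X, ∃ (γ : Ordinal.{0}) (hγ : γ < α),
      x ∈ F γ hγ (fun β hβ => O β (lt_of_le_of_lt hβ hγ))

/-- TWO has a winning strategy in `G₁^α(𝓞(𝓣),𝓞)` on `X`. -/
def TwoWins (X : Type*) [TopologicalSpace X] (𝓣 : Set (Set X)) (α : Ordinal.{0}) : Prop :=
  ∃ F : TwoStrategy X α, IsWinningTwo 𝓣 α F

/-- `tp_{S₁(𝓞(𝓣),𝓞)}(X) = α`: TWO wins the length-`α` game but no shorter one. -/
def TPEq (X : Type*) [TopologicalSpace X] (𝓣 : Set (Set X)) (α : Ordinal.{0}) : Prop :=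
  TwoWins X 𝓣 α ∧ ∀ β < α, ¬ TwoWins X 𝓣 β

/-- `tp_{S₁(𝓞(𝓣),𝓞)}(X) ≤ α`. -/
def TPLe (X : Type*) [TopologicalSpace X] (𝓣 : Set (Set X)) (α : Ordinal.{0}) : Prop :=
  ∃ β ≤ α, TwoWins X 𝓣 β

/-- A strategy for TWO in the length-`α` game `G_c`. -/
def TwoStrategyC (X : Type*) (α : Ordinal.{0}) :=
  ∀ γ : Ordinal.{0}, γ < α → ((β : Ordinal.{0}) → β ≤ γ → Set (Set X)) → Set (Set X)

/-- The strategy `F` for TWO is winning in `G_c^α(𝓞,𝓞)`: to legal histories it responds with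
pairwise disjoint families of open sets refining ONE's last move, and for every play of open
covers by ONE the union of the responses covers `X`. -/
def IsWinningTwoC {X : Type*} [TopologicalSpace X] (α : Ordinal.{0})
    (F : TwoStrategyC X α) : Prop :=
  (∀ (γ : Ordinal.{0}) (hγ : γ < α) (O : (β : Ordinal.{0}) → β ≤ γ → Set (Set X)),
      (∀ β hβ, IsOpenCover (O β hβ)) →
        (∀ V ∈ F γ hγ O, IsOpen V) ∧ (F γ hγ O).Pairwise Disjoint ∧
          ∀ V ∈ F γ hγ O, ∃ U ∈ O γ le_rfl, V ⊆ U) ∧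
  ∀ O : (γ : Ordinal.{0}) → γ < α → Set (Set X),
    (∀ γ hγ, IsOpenCover (O γ hγ)) →
    ∀ x : X, ∃ (γ : Ordinal.{0}) (hγ : γ < α),
      ∃ V ∈ F γ hγ (fun β hβ => O β (lt_of_le_of_lt hβ hγ)), x ∈ V

/-- TWO has a winning strategy in `G_c^α(𝓞,𝓞)` on `X`. -/
def TwoWinsC (X : Type*) [TopologicalSpace X] (α : Ordinal.{0}) : Prop :=
  ∃ F : TwoStrategyC X α, IsWinningTwoC α F

/-- `tp_{S_c(𝓞,𝓞)}(X) = α`. -/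
def TPCEq (X : Type*) [TopologicalSpace X] (α : Ordinal.{0}) : Prop :=
  TwoWinsC X α ∧ ∀ β < α, ¬ TwoWinsC X β

/-- `tp_{S_c(𝓞,𝓞)}(X) ≤ α`. -/
def TPCLe (X : Type*) [TopologicalSpace X] (α : Ordinal.{0}) : Prop :=
  ∃ β ≤ α, TwoWinsC X β



section CantorAux

variable {X : Type*} [TopologicalSpace X]

attribute [local instance] Classical.propDecidable

private lemma disjoint_prod' {V V' : Set X} {K K' : Set (ℕ → Bool)}
    (h : Disjoint V V' ∨ Disjoint K K') :
    Disjoint (V ×ˢ K) (V' ×ˢ K') := by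
  rcases h with h | h
  · exact Set.disjoint_left.2 fun p hp hp' => Set.disjoint_left.1 h hp.1 hp'.1
  · exact Set.disjoint_left.2 fun p hp hp' => Set.disjoint_left.1 h hp.2 hp'.2

private lemma exists_clopen_nhd {B : Set (ℕ → Bool)} (hB : IsOpen B) {c : ℕ → Bool}
    (hc : c ∈ B) : ∃ K, IsClopen K ∧ c ∈ K ∧ K ⊆ B := by
  rw [isOpen_pi_iff] at hB
  obtain ⟨I, u, hu, hsub⟩ := hB c hc
  refine ⟨(I : Set ℕ).pi (fun i => {c i}), ⟨isClosed_set_pi (fun i _ => isClosed_singleton),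
    isOpen_set_pi I.finite_toSet (fun i _ => isOpen_discrete _)⟩,
    fun i _ => rfl, fun c' hc' => hsub (fun i hi => ?_)⟩
  have := hc' i hi
  rw [Set.mem_singleton_iff] at this
  rw [this]
  exact (hu i hi).2

private lemma exists_clopen_rect {U : Set (X × (ℕ → Bool))} (hU : IsOpen U) {x : X}
    {c : ℕ → Bool} (hxc : (x, c) ∈ U) :
    ∃ A K, IsOpen A ∧ IsClopen K ∧ x ∈ A ∧ c ∈ K ∧ A ×ˢ K ⊆ U := by
  rw [isOpen_prod_iff] at hU
  obtain ⟨A, B, hA, hB, hxA, hcB, hsub⟩ := hU x c hxc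
  obtain ⟨K, hK, hcK, hKB⟩ := exists_clopen_nhd hB hcB
  exact ⟨A, K, hA, hK, hxA, hcK, (Set.prod_mono subset_rfl hKB).trans hsub⟩

private def goodSet (𝓤 : Set (Set (X × (ℕ → Bool)))) (V : Set X) (K : Set (ℕ → Bool)) : Prop :=
  IsClopen K ∧ ∃ U ∈ 𝓤, V ×ˢ K ⊆ U

private def VCov (𝓤 : Set (Set (X × (ℕ → Bool)))) : Set (Set X) :=
  {V | IsOpen V ∧ ∀ c : ℕ → Bool, ∃ K, goodSet 𝓤 V K ∧ c ∈ K}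

private lemma VCov_isOpenCover {𝓤 : Set (Set (X × (ℕ → Bool)))} (h : IsOpenCover 𝓤) :
    IsOpenCover (VCov 𝓤) := by
  refine ⟨fun V hV => hV.1, fun x => ?_⟩
  have hch : ∀ c : ℕ → Bool, ∃ A K, (∃ U ∈ 𝓤, A ×ˢ K ⊆ U) ∧ IsOpen A ∧ IsClopen K ∧
      x ∈ A ∧ c ∈ K := by
    intro c
    obtain ⟨U, hU𝓤, hxc⟩ := h.2 (x, c)
    obtain ⟨A, K, hA, hK, hxA, hcK, hsub⟩ := exists_clopen_rect (h.1 U hU𝓤) hxc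
    exact ⟨A, K, ⟨U, hU𝓤, hsub⟩, hA, hK, hxA, hcK⟩
  choose A K hgood hA hK hxA hcK using hch
  obtain ⟨t, ht⟩ := isCompact_univ.elim_finite_subcover K (fun c => (hK c).isOpen)
    (fun c _ => Set.mem_iUnion.2 ⟨c, hcK c⟩)
  refine ⟨⋂ c ∈ t, A c, ⟨isOpen_biInter_finset (fun c _ => hA c), fun c' => ?_⟩,
    Set.mem_iInter₂.2 (fun c _ => hxA c)⟩
  obtain ⟨c, hct, hc'⟩ := Set.mem_iUnion₂.1 (ht (Set.mem_univ c'))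
  refine ⟨K c, ⟨hK c, ?_⟩, hc'⟩
  obtain ⟨U, hU, hsub⟩ := hgood c
  exact ⟨U, hU, (Set.prod_mono (Set.iInter₂_subset c hct) subset_rfl).trans hsub⟩

private lemma exists_partition {𝓤 : Set (Set (X × (ℕ → Bool)))} {V : Set X}
    (h : ∀ c : ℕ → Bool, ∃ K, goodSet 𝓤 V K ∧ c ∈ K) :
    ∃ 𝓚 : Set (Set (ℕ → Bool)),
      (∀ K ∈ 𝓚, IsOpen K ∧ ∃ U ∈ 𝓤, V ×ˢ K ⊆ U) ∧ 𝓚.Pairwise Disjoint ∧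
        ∀ c : ℕ → Bool, ∃ K ∈ 𝓚, c ∈ K := by
  choose B hB hcB using h
  obtain ⟨t, ht⟩ := isCompact_univ.elim_finite_subcover B (fun c => (hB c).1.isOpen)
    (fun c _ => Set.mem_iUnion.2 ⟨c, hcB c⟩)
  set L := t.toList with hL
  set g : ℕ → Set (ℕ → Bool) :=
    fun n => if hn : n < L.length then B (L.get ⟨n, hn⟩) else ∅ with hg
  have hgood : ∀ n, g n = ∅ ∨ goodSet 𝓤 V (g n) := by
    intro n
    by_cases hn : n < L.length
    · right; simp only [hg, dif_pos hn]; exact hB _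
    · left; simp only [hg, dif_neg hn]
  have hclosed : ∀ n, IsClosed (g n) := by
    intro n
    rcases hgood n with h | h
    · rw [h]; exact isClosed_empty
    · exact h.1.isClosed
  have hopen : ∀ n, IsOpen (g n) := by
    intro n
    rcases hgood n with h | h
    · rw [h]; exact isOpen_empty
    · exact h.1.isOpen
  set D : ℕ → Set (ℕ → Bool) := fun n => g n \ ⋃ m ∈ Finset.range n, g m with hD
  have hDopen : ∀ n, IsOpen (D n) := fun n =>
    (hopen n).sdiff ((Finset.range n).finite_toSet.isClosed_biUnion (fun m _ => hclosed m))
  have hDsub : ∀ n, D n ⊆ g n := fun n => Set.diff_subset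
  have hkey : ∀ a b : ℕ, a < b → Disjoint (D a) (D b) := by
    intro a b hab
    refine Set.disjoint_left.2 fun c hca hcb => ?_
    exact hcb.2 (Set.mem_biUnion (Finset.mem_range.2 hab) hca.1)
  refine ⟨{K | (∃ n, K = D n) ∧ K.Nonempty}, ?_, ?_, ?_⟩
  · rintro K ⟨⟨n, rfl⟩, hne⟩
    have hgne : (g n).Nonempty := hne.mono (hDsub n)
    rcases hgood n with h | h
    · rw [h] at hgne; exact absurd hgne (Set.not_nonempty_empty)
    · obtain ⟨U, hU, hsub⟩ := h.2
      exact ⟨hDopen n, U, hU, (Set.prod_mono subset_rfl (hDsub n)).trans hsub⟩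
  · rintro K ⟨⟨n, rfl⟩, _⟩ K' ⟨⟨m, rfl⟩, _⟩ hne
    have hnm : n ≠ m := fun h => hne (by rw [h])
    rcases hnm.lt_or_gt with h | h
    · exact hkey n m h
    · exact (hkey m n h).symm
  · intro c
    have hex : ∃ n, c ∈ g n := by
      obtain ⟨c₀, hc₀t, hcB0⟩ := Set.mem_iUnion₂.1 (ht (Set.mem_univ c))
      have hmem : c₀ ∈ L := Finset.mem_toList.2 hc₀t
      obtain ⟨i, hi⟩ := List.mem_iff_get.1 hmem
      refine ⟨i.1, ?_⟩
      simp only [hg, dif_pos i.isLt]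
      rw [show (⟨i.1, i.isLt⟩ : Fin L.length) = i from rfl, hi]
      exact hcB0
    refine ⟨D (Nat.find hex), ⟨⟨Nat.find hex, rfl⟩, ⟨c, ?_⟩⟩, ?_⟩
    all_goals {
      refine ⟨Nat.find_spec hex, fun hc => ?_⟩
      obtain ⟨m, hm, hcm⟩ := Set.mem_iUnion₂.1 hc
      exact Nat.find_min hex (Finset.mem_range.1 hm) hcm }

private def pKitSpec (𝓤 : Set (Set (X × (ℕ → Bool)))) (V : Set X)
    (𝓚 : Set (Set (ℕ → Bool))) : Prop :=
  (∀ K ∈ 𝓚, IsOpen K ∧ ∃ U ∈ 𝓤, V ×ˢ K ⊆ U) ∧ 𝓚.Pairwise Disjoint ∧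
    ∀ c : ℕ → Bool, ∃ K ∈ 𝓚, c ∈ K

private noncomputable def pKit (𝓤 : Set (Set (X × (ℕ → Bool)))) (V : Set X) :
    Set (Set (ℕ → Bool)) :=
  if h : ∃ 𝓚, pKitSpec 𝓤 V 𝓚 then h.choose else ∅

private lemma pKit_spec {𝓤 : Set (Set (X × (ℕ → Bool)))} {V : Set X}
    (h : ∃ 𝓚, pKitSpec 𝓤 V 𝓚) : pKitSpec 𝓤 V (pKit 𝓤 V) := by
  rw [pKit, dif_pos h]; exact h.choose_spec

private lemma pKit_good {𝓤 : Set (Set (X × (ℕ → Bool)))} {V : Set X} {K : Set (ℕ → Bool)}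
    (hK : K ∈ pKit 𝓤 V) : IsOpen K ∧ ∃ U ∈ 𝓤, V ×ˢ K ⊆ U := by
  by_cases h : ∃ 𝓚, pKitSpec 𝓤 V 𝓚
  · exact (pKit_spec h).1 K hK
  · rw [pKit, dif_neg h] at hK; exact absurd hK (Set.notMem_empty K)

private lemma pKit_pairwise {𝓤 : Set (Set (X × (ℕ → Bool)))} {V : Set X} :
    (pKit 𝓤 V).Pairwise Disjoint := by
  by_cases h : ∃ 𝓚, pKitSpec 𝓤 V 𝓚
  · exact (pKit_spec h).2.1
  · rw [pKit, dif_neg h]; exact Set.pairwise_empty _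

private lemma pKit_cover {𝓤 : Set (Set (X × (ℕ → Bool)))} {V : Set X}
    (h : ∃ W ∈ VCov 𝓤, V ⊆ W) : ∀ c : ℕ → Bool, ∃ K ∈ pKit 𝓤 V, c ∈ K := by
  obtain ⟨W, hW, hVW⟩ := h
  obtain ⟨𝓚, h1, h2, h3⟩ := exists_partition hW.2
  have hspec : ∃ 𝓚, pKitSpec 𝓤 V 𝓚 := by
    refine ⟨𝓚, fun K hK => ⟨(h1 K hK).1, ?_⟩, h2, h3⟩
    obtain ⟨U, hU, hsub⟩ := (h1 K hK).2
    exact ⟨U, hU, (Set.prod_mono hVW subset_rfl).trans hsub⟩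
  exact (pKit_spec hspec).2.2

private def prodResp (𝓤 : Set (Set (X × (ℕ → Bool)))) (T : Set (Set X)) :
    Set (Set (X × (ℕ → Bool))) :=
  {W | ∃ V ∈ T, ∃ K ∈ pKit 𝓤 V, W = V ×ˢ K}

private lemma twoWinsC_prod {α : Ordinal.{0}} (h : TwoWinsC X α) :
    TwoWinsC (X × (ℕ → Bool)) α := by
  obtain ⟨F, hF1, hF2⟩ := h
  refine ⟨fun γ hγ O => prodResp (O γ le_rfl) (F γ hγ (fun β hβ => VCov (O β hβ))), ?_, ?_⟩
  · intro γ hγ O hO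
    have hO' : ∀ β hβ, IsOpenCover (VCov (O β hβ)) := fun β hβ => VCov_isOpenCover (hO β hβ)
    obtain ⟨hT1, hT2, hT3⟩ := hF1 γ hγ _ hO'
    refine ⟨?_, ?_, ?_⟩
    · rintro W ⟨V, hV, K, hK, rfl⟩
      exact (hT1 V hV).prod (pKit_good hK).1
    · rintro W ⟨V, hV, K, hK, rfl⟩ W' ⟨V', hV', K', hK', rfl⟩ hne
      by_cases hVV : V = V'
      · subst hVV
        have hKK : K ≠ K' := fun h => hne (by rw [h])
        exact disjoint_prod' (Or.inr (pKit_pairwise hK hK' hKK))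
      · exact disjoint_prod' (Or.inl (hT2 hV hV' hVV))
    · rintro W ⟨V, hV, K, hK, rfl⟩
      exact (pKit_good hK).2
  · intro O hO x
    have hO' : ∀ γ hγ, IsOpenCover (VCov (O γ hγ)) := fun γ hγ => VCov_isOpenCover (hO γ hγ)
    obtain ⟨γ, hγ, V, hV, hxV⟩ := hF2 (fun γ hγ => VCov (O γ hγ)) hO' x.1
    have href : ∃ W ∈ VCov (O γ hγ), V ⊆ W :=
      (hF1 γ hγ (fun β hβ => VCov (O β (lt_of_le_of_lt hβ hγ)))
        (fun β hβ => hO' _ _)).2.2 V hV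
    obtain ⟨K, hK, hcK⟩ := pKit_cover href x.2
    exact ⟨γ, hγ, V ×ˢ K, ⟨V, hV, K, hK, rfl⟩, hxV, hcK⟩

private def prodify (𝓦 : Set (Set X)) : Set (Set (X × (ℕ → Bool))) :=
  {U | ∃ W ∈ 𝓦, U = W ×ˢ (Set.univ : Set (ℕ → Bool))}

private lemma prodify_isOpenCover {𝓦 : Set (Set X)} (h : IsOpenCover 𝓦) :
    IsOpenCover (prodify 𝓦) := by
  constructor
  · rintro U ⟨W, hW, rfl⟩
    exact (h.1 W hW).prod isOpen_univ
  · intro p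
    obtain ⟨W, hW, hp⟩ := h.2 p.1
    exact ⟨W ×ˢ Set.univ, ⟨W, hW, rfl⟩, hp, Set.mem_univ _⟩

private def sliceResp (T : Set (Set (X × (ℕ → Bool)))) : Set (Set X) :=
  {W | ∃ V ∈ T, W = (fun x : X => (x, fun _ => false)) ⁻¹' V}

private lemma twoWinsC_of_prod {α : Ordinal.{0}} (h : TwoWinsC (X × (ℕ → Bool)) α) :
    TwoWinsC X α := by
  obtain ⟨G, hG1, hG2⟩ := h
  have hcont : Continuous (fun x : X => (x, (fun _ => false : ℕ → Bool))) :=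
    continuous_id.prodMk continuous_const
  refine ⟨fun γ hγ O => sliceResp (G γ hγ (fun β hβ => prodify (O β hβ))), ?_, ?_⟩
  · intro γ hγ O hO
    have hO' : ∀ β hβ, IsOpenCover (prodify (O β hβ)) :=
      fun β hβ => prodify_isOpenCover (hO β hβ)
    obtain ⟨hT1, hT2, hT3⟩ := hG1 γ hγ _ hO'
    refine ⟨?_, ?_, ?_⟩
    · rintro W ⟨V, hV, rfl⟩
      exact (hT1 V hV).preimage hcont
    · rintro W ⟨V, hV, rfl⟩ W' ⟨V', hV', rfl⟩ hne
      have hVV : V ≠ V' := fun h => hne (by rw [h])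
      exact Set.disjoint_left.2 fun a ha ha' =>
        Set.disjoint_left.1 (hT2 hV hV' hVV) ha ha'
    · rintro W ⟨V, hV, rfl⟩
      obtain ⟨U, ⟨W', hW', rfl⟩, hsub⟩ := hT3 V hV
      exact ⟨W', hW', fun a ha => (hsub ha).1⟩
  · intro O hO x
    obtain ⟨γ, hγ, V, hV, hxV⟩ := hG2 (fun γ hγ => prodify (O γ hγ))
      (fun γ hγ => prodify_isOpenCover (hO γ hγ)) (x, fun _ => false)
    exact ⟨γ, hγ, _, ⟨V, hV, rfl⟩, hxV⟩

end CantorAux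

theorem statement_19 {X : Type*} [MetricSpace X] [CompactSpace X]
    (hdef : ∃ α : Ordinal.{0}, TwoWinsC X α) :
    ∀ d : Ordinal.{0}, TPCEq X (1 + d) ↔ TPCEq (X × (ℕ → Bool)) (1 + d) := by
  intro d
  have key : ∀ β : Ordinal.{0}, TwoWinsC X β ↔ TwoWinsC (X × (ℕ → Bool)) β :=
    fun β => ⟨twoWinsC_prod, twoWinsC_of_prod⟩
  constructor
  · rintro ⟨h1, h2⟩
    exact ⟨(key _).1 h1, fun β hβ hw => h2 β hβ ((key β).2 hw)⟩
  · rintro ⟨h1, h2⟩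
    exact ⟨(key _).2 h1, fun β hβ hw => h2 β hβ ((key β).1 hw)⟩
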